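/- arXiv:2102.12148 — 2 statements merged into one kernel-verified Lean document; each statement's English description precedes it below -/
import Mathlib

section
/- Let M be a finitely generated faithful multiplication R-module and N a submodule of M. Then N is a 1-absorbing primary submodule of M if and only if (N :_R M) is a 1-absorbing primary ideal of R. -/
open Submodule

section Defs

variable {R : Type*} [CommRing R]

/-- A prime submodule: proper, and `a • m ∈ N` implies `m ∈ N` or `a ∈ (N :_R M)`. -/
def IsPrimeSubmodule {M : Type*} [AddCommGroup M] [Module R M] (N : Submodule R M) : Prop :=
  N ≠ ⊤ ∧ ∀ (a : R) (m : M), a • m ∈ N → m ∈ N ∨ a ∈ N.colon ⊤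

/-- The `M`-radical of `N`: intersection of all prime submodules containing `N`. -/
def Mrad {M : Type*} [AddCommGroup M] [Module R M] (N : Submodule R M) : Submodule R M :=
  sInf {P | IsPrimeSubmodule P ∧ N ≤ P}

/-- A 1-absorbing primary submodule. -/
def Is1AbsPrimary {M : Type*} [AddCommGroup M] [Module R M] (N : Submodule R M) : Prop :=
  N ≠ ⊤ ∧ ∀ a b : R, ¬ IsUnit a → ¬ IsUnit b → ∀ m : M,
    (a * b) • m ∈ N → a * b ∈ N.colon ⊤ ∨ m ∈ Mrad N

/-- A 2-absorbing primary submodule. -/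
def Is2AbsPrimary {M : Type*} [AddCommGroup M] [Module R M] (N : Submodule R M) : Prop :=
  N ≠ ⊤ ∧ ∀ (a b : R) (m : M), (a * b) • m ∈ N →
    a * b ∈ N.colon ⊤ ∨ a • m ∈ Mrad N ∨ b • m ∈ Mrad N

/-- A 1-absorbing primary ideal. -/
def Is1AbsPrimaryIdeal {A : Type*} [CommRing A] (I : Ideal A) : Prop :=
  I ≠ ⊤ ∧ ∀ a b c : A, ¬ IsUnit a → ¬ IsUnit b → ¬ IsUnit c →
    a * b * c ∈ I → a * b ∈ I ∨ c ∈ I.radical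

/-- A multiplication module: every submodule `N` satisfies `N = (N :_R M) M`. -/
def IsMultiplicationModule (R M : Type*) [CommRing R] [AddCommGroup M] [Module R M] : Prop :=
  ∀ N : Submodule R M, N = (N.colon ⊤) • (⊤ : Submodule R M)

end Defs

section Aux

open Polynomial

variable {R M : Type*} [CommRing R] [AddCommGroup M] [Module R M]

/-- Determinant trick: `(IM :_R M) ≤ √I` for f.g. faithful modules. -/
lemma colon_smul_top_le_radical [Module.Finite R M]
    (hfaith : (⊥ : Submodule R M).colon ⊤ = ⊥) (I : Ideal R) :
    (I • (⊤ : Submodule R M)).colon ⊤ ≤ I.radical := by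
  intro a ha
  have hrange : LinearMap.range (a • (LinearMap.id : M →ₗ[R] M)) ≤ I • (⊤ : Submodule R M) := by
    rintro x ⟨m, rfl⟩
    exact Submodule.mem_colon.mp ha m trivial
  obtain ⟨p, hmon, -, hcoeff, heval⟩ :=
    LinearMap.exists_monic_and_coeff_mem_pow_and_aeval_eq_zero_of_range_le_smul R
      (a • (LinearMap.id : M →ₗ[R] M)) I hrange
  have key : aeval (a • (LinearMap.id : M →ₗ[R] M)) p =
      (p.eval a) • (LinearMap.id : M →ₗ[R] M) := by
    rw [← Module.algebraMap_end_eq_smul_id, ← Module.algebraMap_end_eq_smul_id,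
      Polynomial.aeval_algebraMap_apply, Polynomial.aeval_def, Polynomial.eval₂_eq_eval_map,
      Algebra.algebraMap_self, Polynomial.map_id]
  have heval0 : p.eval a = 0 := by
    have : p.eval a ∈ (⊥ : Submodule R M).colon ⊤ := by
      rw [Submodule.mem_colon]
      intro m _
      have := congrArg (fun f : M →ₗ[R] M => f m) (key ▸ heval)
      simpa using this
    rwa [hfaith, Submodule.mem_bot] at this
  refine ⟨p.natDegree, ?_⟩
  have hsum := Polynomial.eval_eq_sum_range (p := p) a
  rw [Finset.sum_range_succ, hmon.coeff_natDegree, one_mul, heval0] at hsum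
  have hn : a ^ p.natDegree = -∑ i ∈ Finset.range p.natDegree, p.coeff i * a ^ i := by
    linear_combination -hsum
  rw [hn]
  refine neg_mem (Ideal.sum_mem _ fun i hi => Ideal.mul_mem_right _ _ ?_)
  exact Ideal.pow_le_self (Nat.sub_ne_zero_of_lt (Finset.mem_range.mp hi)) (hcoeff i)

/-- `pM` is a prime submodule for `p` a prime ideal, `M` f.g. faithful multiplication. -/
lemma isPrimeSubmodule_smul_top [Module.Finite R M]
    (hfaith : (⊥ : Submodule R M).colon ⊤ = ⊥) (hmul : IsMultiplicationModule R M)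
    {p : Ideal R} (hp : p.IsPrime) : IsPrimeSubmodule (p • (⊤ : Submodule R M)) := by
  constructor
  · intro htop
    have h1 : (1 : R) ∈ (p • (⊤ : Submodule R M)).colon ⊤ := by
      rw [Submodule.mem_colon]
      intro m _
      rw [htop]; trivial
    have := colon_smul_top_le_radical hfaith p h1
    rw [hp.radical] at this
    exact hp.ne_top (Ideal.eq_top_of_isUnit_mem _ this isUnit_one)
  · intro a m ham
    by_cases hap : a ∈ p
    · exact Or.inr (Submodule.mem_colon.mpr fun m' _ => Submodule.smul_mem_smul hap trivial)
    · left
      set J := (Submodule.span R {m}).colon (⊤ : Submodule R M) with hJ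
      have hspan : Submodule.span R {m} = J • (⊤ : Submodule R M) := hmul _
      have hJp : J ≤ p := by
        intro c hc
        have habc : a * c ∈ (p • (⊤ : Submodule R M)).colon ⊤ := by
          rw [Submodule.mem_colon]
          intro m' _
          have hcm' : c • m' ∈ Submodule.span R {m} := Submodule.mem_colon.mp hc m' trivial
          obtain ⟨r, hr⟩ := Submodule.mem_span_singleton.mp hcm'
          have : (a * c) • m' = r • (a • m) := by
            rw [mul_smul, ← hr, smul_comm]
          rw [this]
          exact Submodule.smul_mem _ _ ham
        have := colon_smul_top_le_radical hfaith p habc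
        rw [hp.radical] at this
        exact (hp.mem_or_mem this).resolve_left hap
      have : m ∈ J • (⊤ : Submodule R M) := hspan ▸ Submodule.mem_span_singleton_self m
      exact Submodule.smul_mono hJp le_top this

/-- The colon ideal of a prime submodule is prime. -/
lemma colon_isPrime_of_isPrimeSubmodule {P : Submodule R M} (hP : IsPrimeSubmodule P) :
    (P.colon (⊤ : Submodule R M)).IsPrime := by
  constructor
  · intro htop
    refine hP.1 (eq_top_iff.mpr fun m _ => ?_)
    simpa using Submodule.mem_colon.mp (htop ▸ Submodule.mem_top : (1:R) ∈ P.colon ⊤) m trivial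
  · intro a b hab
    by_contra hcon
    push_neg at hcon
    obtain ⟨ha, hb⟩ := hcon
    rw [Submodule.mem_colon] at ha
    push_neg at ha
    obtain ⟨m, -, ham⟩ := ha
    have : (a * b) • m ∈ P := Submodule.mem_colon.mp hab m trivial
    rw [mul_comm, mul_smul] at this
    rcases hP.2 b (a • m) this with h | h
    · exact ham h
    · exact hb h

/-- For f.g. faithful multiplication modules, `M`-rad `N` = `√(N : M) • M`. -/
lemma mrad_eq_radical_smul_top [Module.Finite R M]
    (hfaith : (⊥ : Submodule R M).colon ⊤ = ⊥) (hmul : IsMultiplicationModule R M)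
    (N : Submodule R M) :
    Mrad N = (N.colon (⊤ : Submodule R M)).radical • (⊤ : Submodule R M) := by
  apply le_antisymm
  · -- Mrad N ≤ √(N:M) • ⊤
    intro m hm
    set J := (Submodule.span R {m}).colon (⊤ : Submodule R M) with hJ
    have hspan : Submodule.span R {m} = J • (⊤ : Submodule R M) := hmul _
    by_cases hJr : J ≤ (N.colon (⊤ : Submodule R M)).radical
    · have : m ∈ J • (⊤ : Submodule R M) := hspan ▸ Submodule.mem_span_singleton_self m
      exact Submodule.smul_mono hJr le_top this
    · exfalso
      obtain ⟨c, hcJ, hcr⟩ := Set.not_subset.mp hJr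
      simp only [SetLike.mem_coe] at hcJ hcr
      rw [Ideal.radical_eq_sInf, Ideal.mem_sInf] at hcr
      push_neg at hcr
      obtain ⟨p, ⟨hNp, hp⟩, hcp⟩ := hcr
      have hPprime : IsPrimeSubmodule (p • (⊤ : Submodule R M)) :=
        isPrimeSubmodule_smul_top hfaith hmul hp
      have hNP : N ≤ p • (⊤ : Submodule R M) := by
        calc N = (N.colon ⊤) • (⊤ : Submodule R M) := hmul N
        _ ≤ p • (⊤ : Submodule R M) := Submodule.smul_mono hNp le_top
      have hle : Mrad N ≤ p • (⊤ : Submodule R M) := by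
        unfold Mrad
        exact sInf_le ⟨hPprime, hNP⟩
      have hmP : m ∈ p • (⊤ : Submodule R M) := hle hm
      have hcP : c ∈ (p • (⊤ : Submodule R M)).colon ⊤ := by
        rw [Submodule.mem_colon]
        intro m' _
        have : c • m' ∈ Submodule.span R {m} := Submodule.mem_colon.mp hcJ m' trivial
        obtain ⟨r, hr⟩ := Submodule.mem_span_singleton.mp this
        rw [← hr]
        exact Submodule.smul_mem _ _ hmP
      have := colon_smul_top_le_radical hfaith p hcP
      rw [hp.radical] at this
      exact hcp this
  · -- √(N:M) • ⊤ ≤ Mrad N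
    unfold Mrad
    refine le_sInf fun P hP => ?_
    obtain ⟨hPprime, hNP⟩ := hP
    have hrad : (N.colon (⊤ : Submodule R M)).radical ≤ P.colon ⊤ := by
      have hprime := colon_isPrime_of_isPrimeSubmodule hPprime
      rw [← (show (P.colon ⊤).IsPrime from hprime).radical]
      exact Ideal.radical_mono (fun r hr =>
        Submodule.mem_colon.mpr fun m hm => hNP (Submodule.mem_colon.mp hr m hm))
    calc (N.colon (⊤ : Submodule R M)).radical • (⊤ : Submodule R M)
        ≤ (P.colon ⊤) • (⊤ : Submodule R M) := Submodule.smul_mono hrad le_top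
      _ = P := (hmul P).symm

end Aux

theorem one_abs_primary_iff_colon_one_abs_primary {R M : Type*} [CommRing R] [AddCommGroup M]
    [Module R M] [Module.Finite R M] (hfaith : (⊥ : Submodule R M).colon ⊤ = ⊥)
    (hmul : IsMultiplicationModule R M) (N : Submodule R M) :
    Is1AbsPrimary N ↔ Is1AbsPrimaryIdeal (N.colon ⊤) := by
  have hntop : N ≠ ⊤ ↔ N.colon (⊤ : Submodule R M) ≠ ⊤ := by
    constructor
    · intro hN hc
      exact hN (by rw [hmul N, show N.colon ⊤ = ⊤ from hc, Submodule.top_smul])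
    · intro hc hN
      refine hc (eq_top_iff.mpr fun r _ => ?_)
      exact Submodule.mem_colon.mpr fun m _ => hN ▸ Submodule.mem_top
  have hmrad := mrad_eq_radical_smul_top hfaith hmul N
  constructor
  · rintro ⟨hN, habs⟩
    refine ⟨hntop.mp hN, fun a b c ha hb hc habc => ?_⟩
    by_cases hab : a * b ∈ N.colon (⊤ : Submodule R M)
    · exact Or.inl hab
    · right
      have hcm : ∀ m : M, c • m ∈ Mrad N := by
        intro m
        have : (a * b) • (c • m) ∈ N := by
          have : (a * b) • (c • m) = (a * b * c) • m := by
            rw [mul_smul (a*b) c m]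
          rw [this]
          exact Submodule.mem_colon.mp habc m trivial
        exact (habs a b ha hb (c • m) this).resolve_left hab
      have : c ∈ (Mrad N).colon (⊤ : Submodule R M) :=
        Submodule.mem_colon.mpr fun m _ => hcm m
      rw [hmrad] at this
      have := colon_smul_top_le_radical hfaith _ this
      rwa [Ideal.radical_idem] at this
  · rintro ⟨hc, habs⟩
    refine ⟨hntop.mpr hc, fun a b ha hb m hab => ?_⟩
    set J := (Submodule.span R {m}).colon (⊤ : Submodule R M) with hJdef
    have hspan : Submodule.span R {m} = J • (⊤ : Submodule R M) := hmul _
    have hJcolon : ∀ d ∈ J, a * b * d ∈ N.colon (⊤ : Submodule R M) := by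
      intro d hd
      rw [Submodule.mem_colon]
      intro m' _
      have hdm' : d • m' ∈ Submodule.span R {m} := Submodule.mem_colon.mp hd m' trivial
      obtain ⟨r, hr⟩ := Submodule.mem_span_singleton.mp hdm'
      have : (a * b * d) • m' = r • ((a * b) • m) := by
        rw [mul_smul (a*b) d m', ← hr, smul_comm]
      rw [this]
      exact Submodule.smul_mem _ _ hab
    by_cases hunit : ∃ d ∈ J, IsUnit d
    · left
      obtain ⟨d, hdJ, hdu⟩ := hunit
      obtain ⟨u, rfl⟩ := hdu
      have h1 : (1 : R) ∈ J := by
        have := J.smul_mem (↑u⁻¹) hdJ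
        simpa using this
      have := hJcolon 1 h1
      simpa using this
    · push_neg at hunit
      by_cases hab' : a * b ∈ N.colon (⊤ : Submodule R M)
      · exact Or.inl hab'
      · right
        have hJrad : J ≤ (N.colon (⊤ : Submodule R M)).radical := by
          intro d hd
          exact ((habs a b d ha hb (hunit d hd) (hJcolon d hd)).resolve_left hab')
        rw [hmrad]
        have : m ∈ J • (⊤ : Submodule R M) := hspan ▸ Submodule.mem_span_singleton_self m
        exact Submodule.smul_mono hJrad le_top this
end

section
/- If N is a 1-absorbing primary submodule of a finitely generated multiplication R-module M, then M-rad(N) is a prime submodule of M. -/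
open Submodule

section Aux

variable {R M : Type*} [CommRing R] [AddCommGroup M] [Module R M]

/-- Determinant trick: if `s • M ⊆ q M` for a prime `q` containing all of `ann M`,
then `s ∈ q`. -/
lemma aux_mem_of_smul_le {R M : Type*} [CommRing R] [AddCommGroup M] [Module R M]
    [Module.Finite R M] {q : Ideal R} (hq : q.IsPrime)
    (hann : ∀ r : R, (∀ m : M, r • m = 0) → r ∈ q)
    {s : R} (h : ∀ m : M, s • m ∈ q • (⊤ : Submodule R M)) : s ∈ q := by
  obtain ⟨p, hpm, -, hpc, hpe⟩ :=
    LinearMap.exists_monic_and_coeff_mem_pow_and_aeval_eq_zero_of_range_le_smul R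
      (algebraMap R (Module.End R M) s) q (by
        rintro x hx
        obtain ⟨m, rfl⟩ := hx
        simpa [Module.algebraMap_end_apply] using h m)
  have heval : Polynomial.eval s p ∈ q := by
    apply hann
    intro m
    have h2 : Polynomial.aeval (algebraMap R (Module.End R M) s) p m = (0 : Module.End R M) m := by
      rw [hpe]
    rwa [Polynomial.aeval_algebraMap_apply_eq_algebraMap_eval,
      Module.algebraMap_end_apply, LinearMap.zero_apply] at h2
  set n := p.natDegree with hn
  have h1 : Polynomial.eval s p = (∑ k ∈ Finset.range n, p.coeff k * s ^ k) + s ^ n := by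
    rw [Polynomial.eval_eq_sum_range, Finset.sum_range_succ, hpm.coeff_natDegree, one_mul]
  have hs_pow : s ^ n ∈ q := by
    have h3 : s ^ n = Polynomial.eval s p - ∑ k ∈ Finset.range n, p.coeff k * s ^ k := by
      rw [h1]; ring
    rw [h3]
    refine q.sub_mem heval (Ideal.sum_mem _ fun k hk => q.mul_mem_right _ ?_)
    exact Ideal.pow_le_self (Nat.sub_ne_zero_of_lt (Finset.mem_range.mp hk)) (hpc k)
  exact hq.mem_of_pow_mem n hs_pow

/-- For a multiplication finitely generated module and a prime ideal `q` containing `ann M`,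
`q • ⊤` is a prime submodule. -/
lemma aux_smul_top_isPrime [Module.Finite R M] (hmul : IsMultiplicationModule R M)
    {q : Ideal R} (hq : q.IsPrime)
    (hann : ∀ r : R, (∀ m : M, r • m = 0) → r ∈ q) :
    IsPrimeSubmodule (q • (⊤ : Submodule R M)) := by
  constructor
  · intro htop
    obtain ⟨r, hr1, hr0⟩ :=
      Submodule.exists_sub_one_mem_and_smul_eq_zero_of_fg_of_le_smul q ⊤
        (Module.Finite.fg_top (R := R) (M := M)) (le_of_eq htop.symm)
    have hrq : r ∈ q := hann r fun m => hr0 m trivial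
    have : (1 : R) ∈ q := by
      have := q.sub_mem hrq hr1
      simpa using this
    exact hq.ne_top (Ideal.eq_top_of_isUnit_mem _ this isUnit_one)
  · intro a m ham
    by_cases haq : a ∈ q
    · right
      rw [Submodule.mem_colon]
      intro x _
      exact Submodule.smul_mem_smul haq trivial
    · left
      by_cases hI : (Submodule.span R {m}).colon ⊤ ≤ q
      · have hm : m ∈ Submodule.span R {m} := Submodule.mem_span_singleton_self m
        rw [hmul (Submodule.span R {m})] at hm
        exact Submodule.smul_mono_left hI hm
      · obtain ⟨c, hcI, hcq⟩ := Set.not_subset.mp hI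
        exfalso
        have hac : a * c ∈ q := by
          apply aux_mem_of_smul_le hq hann
          intro x
          have hcx : c • x ∈ Submodule.span R {m} :=
            Submodule.mem_colon.mp hcI x trivial
          obtain ⟨r, hr⟩ := Submodule.mem_span_singleton.mp hcx
          have : (a * c) • x = r • (a • m) := by
            rw [mul_smul, ← hr, smul_comm]
          rw [this]
          exact Submodule.smul_mem _ r ham
        rcases hq.mem_or_mem hac with h | h
        · exact haq h
        · exact hcq h

end Aux

theorem mrad_isPrime {R M : Type*} [CommRing R] [AddCommGroup M]
    [Module R M] [Module.Finite R M] (hmul : IsMultiplicationModule R M)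
    (N : Submodule R M) (hN : Is1AbsPrimary N) :
    IsPrimeSubmodule (Mrad N) := by
  obtain ⟨hNtop, habs⟩ := hN
  set J : Ideal R := N.colon ⊤ with hJdef
  have hJtop : J ≠ ⊤ := by
    intro h
    apply hNtop
    rw [hmul N, ← hJdef, h, Submodule.top_smul]
  have hannJ : ∀ r : R, (∀ m : M, r • m = 0) → r ∈ J := by
    intro r hr
    rw [hJdef, Submodule.mem_colon]
    intro m _
    rw [hr m]
    exact N.zero_mem
  -- every prime ideal over J gives a prime submodule q • ⊤ containing N
  have hqprime : ∀ q : Ideal R, q.IsPrime → J ≤ q →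
      IsPrimeSubmodule (q • (⊤ : Submodule R M)) ∧ N ≤ q • (⊤ : Submodule R M) := by
    intro q hq hJq
    refine ⟨aux_smul_top_isPrime hmul hq (fun r hr => hJq (hannJ r hr)), ?_⟩
    calc N = J • ⊤ := by rw [hmul N]
    _ ≤ q • ⊤ := Submodule.smul_mono_left hJq
  -- key: anything whose multiples all land in Mrad N is in the radical of J
  have hkey : ∀ v : R, (∀ m : M, v • m ∈ Mrad N) → v ∈ J.radical := by
    intro v hv
    rw [Ideal.radical_eq_sInf, Ideal.mem_sInf]
    intro q hq
    obtain ⟨hJq, hqp⟩ := hq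
    obtain ⟨hP, hNP⟩ := hqprime q hqp hJq
    have hle : Mrad N ≤ q • (⊤ : Submodule R M) := sInf_le ⟨hP, hNP⟩
    exact aux_mem_of_smul_le hqp (fun r hr => hJq (hannJ r hr)) (fun m => hle (hv m))
  -- the radical of J is a prime ideal
  have hrad_ne_top : J.radical ≠ ⊤ := fun h => hJtop (Ideal.radical_eq_top.mp h)
  have hp : (J.radical).IsPrime := by
    constructor
    · exact hrad_ne_top
    · intro a b hab
      by_cases ha : IsUnit a
      · right
        obtain ⟨u, rfl⟩ := ha
        have : (b : R) = ↑u⁻¹ * (↑u * b) := by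
          rw [← mul_assoc, Units.inv_mul, one_mul]
        rw [this]
        exact Ideal.mul_mem_left _ _ hab
      by_cases hb : IsUnit b
      · left
        obtain ⟨u, rfl⟩ := hb
        have : (a : R) = ↑u⁻¹ * (a * ↑u) := by
          rw [mul_comm a, ← mul_assoc, Units.inv_mul, one_mul]
        rw [this]
        exact Ideal.mul_mem_left _ _ hab
      obtain ⟨n, hn⟩ := Ideal.mem_radical_iff.mp hab
      rcases Nat.eq_zero_or_pos n with h0 | h0
      · exfalso
        apply hJtop
        rw [h0, pow_zero] at hn
        exact Ideal.eq_top_of_isUnit_mem _ hn isUnit_one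
      have hu : ¬ IsUnit (a ^ n) := fun h => ha ((isUnit_pow_iff h0.ne').mp h)
      have hv : ¬ IsUnit (b ^ n) := fun h => hb ((isUnit_pow_iff h0.ne').mp h)
      have huv : a ^ n * b ^ n ∈ J := by rwa [← mul_pow]
      by_cases hsq : a ^ n * a ^ n ∈ J
      · left
        exact Ideal.mem_radical_iff.mpr ⟨2 * n, by rwa [two_mul, pow_add]⟩
      · right
        have hbn : b ^ n ∈ J.radical := by
          apply hkey
          intro m
          have habsm := habs (a ^ n) (a ^ n) hu hu ((b ^ n) • m) (by
            have : (a ^ n * a ^ n) • (b ^ n) • m = (a ^ n) • ((a ^ n * b ^ n) • m) := by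
              rw [← mul_smul, ← mul_smul, mul_assoc]
            rw [this]
            exact N.smul_mem _ (Submodule.mem_colon.mp huv m trivial))
          rcases habsm with h | h
          · exact absurd h hsq
          · exact h
        obtain ⟨k, hk⟩ := Ideal.mem_radical_iff.mp hbn
        exact Ideal.mem_radical_iff.mpr ⟨n * k, by rwa [pow_mul]⟩
  obtain ⟨hKprime, hNK⟩ := hqprime J.radical hp Ideal.le_radical
  have h1 : Mrad N ≤ J.radical • (⊤ : Submodule R M) := sInf_le ⟨hKprime, hNK⟩
  have h2 : J.radical • (⊤ : Submodule R M) ≤ Mrad N := by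
    apply le_sInf
    rintro P ⟨hPprime, hNP⟩
    rw [Submodule.smul_le]
    intro r hr m _
    obtain ⟨k, hk⟩ := Ideal.mem_radical_iff.mp hr
    have claim : ∀ k (m : M), r ^ k • m ∈ P → r • m ∈ P := by
      intro k
      induction k with
      | zero => intro m hm; rw [pow_zero, one_smul] at hm; exact P.smul_mem r hm
      | succ k ih =>
        intro m hm
        rw [pow_succ', mul_smul] at hm
        rcases hPprime.2 r (r ^ k • m) hm with h | h
        · exact ih m h
        · exact Submodule.mem_colon.mp h m trivial
    exact claim k m (hNP (Submodule.mem_colon.mp hk m trivial))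
  have heq : Mrad N = J.radical • (⊤ : Submodule R M) := le_antisymm h1 h2
  rw [heq]
  exact hKprime
end
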